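/- Let G = (V, E) be a finite simple graph with n vertices and m edges, with a fixed orientation assigning to each edge e = uv an ordered pair of its endpoints, and let k be a positive integer. Let G′ = (V′, E′) be the graph constructed from G as follows: replace each vertex u ∈ V by a path u₁u₂u₃ on three new vertices; for each edge e = uv ∈ E introduce four new vertices e_u, e_v, e_w, e_z and the edges e_u e_v, e_v e_w, e_w e_u, e_w e_z; and add the edges u₃ e_u and v₃ e_v. If G′ has a vertex cover of size at most 2n + 2m − k, then G has a vertex cover of size at most n − k. -/
import Mathlib


/-- The generating relation of the graph `G′` built from `G` (with an orientation given by
`fst`/`snd`): each vertex `u` is replaced by a path `u₁u₂u₃` (the vertices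
`Sum.inl (u, 0)`, `Sum.inl (u, 1)`, `Sum.inl (u, 2)`); each edge `e = uv` gets a gadget on
`e_u = Sum.inr (e, 0)`, `e_v = Sum.inr (e, 1)`, `e_w = Sum.inr (e, 2)`,
`e_z = Sum.inr (e, 3)` with edges `e_u e_v, e_v e_w, e_w e_u, e_w e_z`; and the edges
`u₃ e_u` and `v₃ e_v` are added, where `u = fst e` and `v = snd e`. -/
def vcu2Rel {V : Type*} (G : SimpleGraph V) (fst snd : Sym2 V → V) :
    ((V × Fin 3) ⊕ (↥G.edgeSet × Fin 4)) → ((V × Fin 3) ⊕ (↥G.edgeSet × Fin 4)) → Prop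
  | Sum.inl (u, i), Sum.inl (w, j) => u = w ∧ ((i = 0 ∧ j = 1) ∨ (i = 1 ∧ j = 2))
  | Sum.inr (e, i), Sum.inr (f, j) =>
      e = f ∧ ((i = 0 ∧ j = 1) ∨ (i = 1 ∧ j = 2) ∨ (i = 2 ∧ j = 0) ∨ (i = 2 ∧ j = 3))
  | Sum.inl (u, i), Sum.inr (e, j) =>
      i = 2 ∧ ((j = 0 ∧ fst e.val = u) ∨ (j = 1 ∧ snd e.val = u))
  | _, _ => False

/-- The graph `G′` constructed from `G` and the orientation `fst`/`snd`. -/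
def vcu2Graph {V : Type*} (G : SimpleGraph V) (fst snd : Sym2 V → V) :
    SimpleGraph ((V × Fin 3) ⊕ (↥G.edgeSet × Fin 4)) :=
  SimpleGraph.fromRel (vcu2Rel G fst snd)

/-- If `G′` (built from a finite graph `G` with `n` vertices, `m` edges and a
fixed orientation `fst`/`snd` of its edges) has a vertex cover of size at most
`2n + 2m − k`, then `G` has a vertex cover of size at most `n − k`. -/
theorem stmt_18 {V : Type*} [Fintype V] (G : SimpleGraph V) (fst snd : Sym2 V → V)
    (horient : ∀ e ∈ G.edgeSet, e = s(fst e, snd e)) (k : ℕ) (hk : 0 < k)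
    (hcover : ∃ C' : Set ((V × Fin 3) ⊕ (↥G.edgeSet × Fin 4)),
      (∀ ⦃x y⦄, (vcu2Graph G fst snd).Adj x y → x ∈ C' ∨ y ∈ C') ∧
      (C'.ncard : ℤ) ≤ 2 * (Fintype.card V : ℤ) + 2 * (G.edgeSet.ncard : ℤ) - k) :
    ∃ C : Set V, (∀ ⦃u v : V⦄, G.Adj u v → u ∈ C ∨ v ∈ C) ∧
      (C.ncard : ℤ) ≤ (Fintype.card V : ℤ) - k := by
  classical
  obtain ⟨C', hcov, hsize⟩ := hcover
  haveI : Fintype ↥G.edgeSet := Fintype.ofFinite _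
  haveI : Fintype ((V × Fin 3) ⊕ (↥G.edgeSet × Fin 4)) := Fintype.ofFinite _
  have hfin : C'.Finite := Set.toFinite _
  set S : Finset ((V × Fin 3) ⊕ (↥G.edgeSet × Fin 4)) := hfin.toFinset with hS
  -- adjacency helper
  have hadj' : ∀ x y : ((V × Fin 3) ⊕ (↥G.edgeSet × Fin 4)), x ≠ y →
      (vcu2Rel G fst snd x y ∨ vcu2Rel G fst snd y x) → x ∈ C' ∨ y ∈ C' := by
    intro x y hxy hr
    exact hcov ((SimpleGraph.fromRel_adj _ _ _).2 ⟨hxy, hr⟩)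
  -- fibers
  set g : ((V × Fin 3) ⊕ (↥G.edgeSet × Fin 4)) → V ⊕ ↥G.edgeSet :=
    (fun x => match x with
      | Sum.inl (u, _) => Sum.inl u
      | Sum.inr (e, _) => Sum.inr e) with hg
  set fibV : V → Finset ((V × Fin 3) ⊕ (↥G.edgeSet × Fin 4)) :=
    fun u => S.filter (fun x => g x = Sum.inl u) with hfibV
  set fibE : ↥G.edgeSet → Finset ((V × Fin 3) ⊕ (↥G.edgeSet × Fin 4)) :=
    fun e => S.filter (fun x => g x = Sum.inr e) with hfibE
  set A : Finset V := Finset.univ.filter (fun u => 2 ≤ (fibV u).card) with hA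
  set B : Finset ↥G.edgeSet := Finset.univ.filter (fun e => 3 ≤ (fibE e).card) with hB
  have memV : ∀ (u : V) (i : Fin 3), Sum.inl (u, i) ∈ C' → Sum.inl (u, i) ∈ fibV u := by
    intro u i h
    exact Finset.mem_filter.2 ⟨hfin.mem_toFinset.2 h, rfl⟩
  have memE : ∀ (e : ↥G.edgeSet) (i : Fin 4), Sum.inr (e, i) ∈ C' → Sum.inr (e, i) ∈ fibE e := by
    intro e i h
    exact Finset.mem_filter.2 ⟨hfin.mem_toFinset.2 h, rfl⟩
  have hpair : ∀ (t : Finset ((V × Fin 3) ⊕ (↥G.edgeSet × Fin 4))) (x y), x ≠ y →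
      x ∈ t → y ∈ t → 2 ≤ t.card := by
    intro t x y hxy hx hy
    calc 2 = ({x, y} : Finset _).card := (Finset.card_pair hxy).symm
    _ ≤ t.card := Finset.card_le_card (by
        intro z hz; simp only [Finset.mem_insert, Finset.mem_singleton] at hz
        rcases hz with rfl | rfl <;> assumption)
  have htriple : ∀ (t : Finset ((V × Fin 3) ⊕ (↥G.edgeSet × Fin 4))) (x y z),
      x ≠ y → x ≠ z → y ≠ z → x ∈ t → y ∈ t → z ∈ t → 3 ≤ t.card := by
    intro t x y z hxy hxz hyz hx hy hz
    have hcard : ({x, y, z} : Finset _).card = 3 := by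
      rw [Finset.card_insert_of_notMem (by simp [hxy, hxz]), Finset.card_pair hyz]
    calc 3 = ({x, y, z} : Finset _).card := hcard.symm
    _ ≤ t.card := Finset.card_le_card (by
        intro w hw
        simp only [Finset.mem_insert, Finset.mem_singleton] at hw
        rcases hw with rfl | rfl | rfl <;> assumption)
  -- each vertex fiber is nonempty
  have hfibV1 : ∀ u : V, 1 ≤ (fibV u).card := by
    intro u
    have h := hadj' (Sum.inl (u, 0)) (Sum.inl (u, 1)) (by simp)
      (Or.inl ⟨rfl, Or.inl ⟨rfl, rfl⟩⟩)
    rcases h with h | h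
    · exact Finset.card_pos.2 ⟨_, memV u 0 h⟩
    · exact Finset.card_pos.2 ⟨_, memV u 1 h⟩
  -- each edge fiber has at least two elements
  have hfibE2 : ∀ e : ↥G.edgeSet, 2 ≤ (fibE e).card := by
    intro e
    have h1 := hadj' (Sum.inr (e, 0)) (Sum.inr (e, 1)) (by simp)
      (Or.inl ⟨rfl, Or.inl ⟨rfl, rfl⟩⟩)
    have h2 := hadj' (Sum.inr (e, 2)) (Sum.inr (e, 3)) (by simp)
      (Or.inl ⟨rfl, Or.inr (Or.inr (Or.inr ⟨rfl, rfl⟩))⟩)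
    rcases h1 with h1 | h1 <;> rcases h2 with h2 | h2
    · exact hpair _ _ _ (by simp) (memE e 0 h1) (memE e 2 h2)
    · exact hpair _ _ _ (by simp) (memE e 0 h1) (memE e 3 h2)
    · exact hpair _ _ _ (by simp) (memE e 1 h1) (memE e 2 h2)
    · exact hpair _ _ _ (by simp) (memE e 1 h1) (memE e 3 h2)
  -- counting
  have hsum : S.card = ∑ b : V ⊕ ↥G.edgeSet, (S.filter (fun x => g x = b)).card :=
    Finset.card_eq_sum_card_fiberwise (fun x _ => Finset.mem_univ _)
  rw [Fintype.sum_sum_type] at hsum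
  have hVsum : Fintype.card V + A.card ≤ ∑ u : V, (fibV u).card := by
    have hle : ∑ u : V, (1 + if u ∈ A then 1 else 0) ≤ ∑ u : V, (fibV u).card := by
      apply Finset.sum_le_sum
      intro u _
      by_cases hu : u ∈ A
      · simpa [hu] using (Finset.mem_filter.1 hu).2
      · simpa [hu] using hfibV1 u
    calc Fintype.card V + A.card = ∑ u : V, (1 + if u ∈ A then 1 else 0) := by
          rw [Finset.sum_add_distrib, Finset.sum_ite_mem, Finset.univ_inter]
          simp
    _ ≤ _ := hle
  have hEsum : 2 * Fintype.card ↥G.edgeSet + B.card ≤ ∑ e : ↥G.edgeSet, (fibE e).card := by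
    have hle : ∑ e : ↥G.edgeSet, (2 + if e ∈ B then 1 else 0) ≤
        ∑ e : ↥G.edgeSet, (fibE e).card := by
      apply Finset.sum_le_sum
      intro e _
      by_cases he : e ∈ B
      · have := (Finset.mem_filter.1 he).2
        simp only [he, if_true]
        omega
      · simpa [he] using hfibE2 e
    calc 2 * Fintype.card ↥G.edgeSet + B.card
        = ∑ e : ↥G.edgeSet, (2 + if e ∈ B then 1 else 0) := by
          rw [Finset.sum_add_distrib, Finset.sum_ite_mem, Finset.univ_inter]
          simp [mul_comm]
    _ ≤ _ := hle
  have hScard : Fintype.card V + A.card + (2 * Fintype.card ↥G.edgeSet + B.card) ≤ S.card := by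
    rw [hsum]; exact Nat.add_le_add hVsum hEsum
  have hC'card : C'.ncard = S.card := Set.ncard_eq_toFinset_card _ hfin
  have hm : G.edgeSet.ncard = Fintype.card ↥G.edgeSet := by
    rw [← Nat.card_coe_set_eq, Nat.card_eq_fintype_card]
  have hAB : (A.card : ℤ) + B.card ≤ (Fintype.card V : ℤ) - k := by
    have h1 : (Fintype.card V + A.card + (2 * Fintype.card ↥G.edgeSet + B.card) : ℤ) ≤
        S.card := by exact_mod_cast hScard
    rw [hC'card, hm] at hsize
    push_cast at h1 hsize ⊢
    linarith
  -- key: if u ∉ A then u₃ ∉ C'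
  have h3 : ∀ u : V, u ∉ A → Sum.inl (u, (2 : Fin 3)) ∉ C' := by
    intro u hu hmem
    apply hu
    simp only [hA, Finset.mem_filter, Finset.mem_univ, true_and]
    rcases hadj' (Sum.inl (u, 0)) (Sum.inl (u, 1)) (by simp)
        (Or.inl ⟨rfl, Or.inl ⟨rfl, rfl⟩⟩) with h | h
    · exact hpair _ _ _ (by simp) (memV u 0 h) (memV u 2 hmem)
    · exact hpair _ _ _ (by simp) (memV u 1 h) (memV u 2 hmem)
  refine ⟨↑A ∪ (fun e : ↥G.edgeSet => fst e.val) '' ↑B, ?_, ?_⟩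
  · -- cover property
    intro u v huv
    by_contra hcon
    push_neg at hcon
    obtain ⟨hu, hv⟩ := hcon
    have huA : u ∉ A := fun h => hu (Or.inl h)
    have hvA : v ∉ A := fun h => hv (Or.inl h)
    have hmem : s(u, v) ∈ G.edgeSet := G.mem_edgeSet.2 huv
    set e : ↥G.edgeSet := ⟨s(u, v), hmem⟩ with he
    have horient' := horient _ hmem
    have hfs : (fst s(u, v) = u ∧ snd s(u, v) = v) ∨ (fst s(u, v) = v ∧ snd s(u, v) = u) := by
      rw [Sym2.eq_iff] at horient'
      tauto
    have hne : u ≠ v := G.ne_of_adj huv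
    -- fst e.val ∈ {u, v} and whichever vertex x satisfies x = fst e.val has x₃ ∉ C'
    have hfst_notin : Sum.inl (fst e.val, (2 : Fin 3)) ∉ C' := by
      rcases hfs with ⟨h1, _⟩ | ⟨h1, _⟩
      · rw [he]; simp only; rw [h1]; exact h3 u huA
      · rw [he]; simp only; rw [h1]; exact h3 v hvA
    have hsnd_notin : Sum.inl (snd e.val, (2 : Fin 3)) ∉ C' := by
      rcases hfs with ⟨_, h2⟩ | ⟨_, h2⟩
      · rw [he]; simp only; rw [h2]; exact h3 v hvA
      · rw [he]; simp only; rw [h2]; exact h3 u huA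
    -- e_u ∈ C'
    have heu : Sum.inr (e, (0 : Fin 4)) ∈ C' := by
      rcases hadj' (Sum.inl (fst e.val, 2)) (Sum.inr (e, 0)) (by simp)
          (Or.inl ⟨rfl, Or.inl ⟨rfl, rfl⟩⟩) with h | h
      · exact absurd h hfst_notin
      · exact h
    have hev : Sum.inr (e, (1 : Fin 4)) ∈ C' := by
      rcases hadj' (Sum.inl (snd e.val, 2)) (Sum.inr (e, 1)) (by simp)
          (Or.inl ⟨rfl, Or.inr ⟨rfl, rfl⟩⟩) with h | h
      · exact absurd h hsnd_notin
      · exact h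
    have hewz := hadj' (Sum.inr (e, 2)) (Sum.inr (e, 3)) (by simp)
      (Or.inl ⟨rfl, Or.inr (Or.inr (Or.inr ⟨rfl, rfl⟩))⟩)
    have heB : e ∈ B := by
      simp only [hB, Finset.mem_filter, Finset.mem_univ, true_and]
      rcases hewz with h | h
      · exact htriple _ _ _ _ (by simp) (by simp) (by simp)
          (memE e 0 heu) (memE e 1 hev) (memE e 2 h)
      · exact htriple _ _ _ _ (by simp) (by simp) (by simp)
          (memE e 0 heu) (memE e 1 hev) (memE e 3 h)
    have himg : fst s(u, v) ∈ (fun e : ↥G.edgeSet => fst e.val) '' ↑B := ⟨e, heB, rfl⟩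
    rcases hfs with ⟨h1, _⟩ | ⟨h1, _⟩
    · rw [h1] at himg; exact hu (Or.inr himg)
    · rw [h1] at himg; exact hv (Or.inr himg)
  · -- cardinality bound
    have hle : ((↑A : Set V) ∪ (fun e : ↥G.edgeSet => fst e.val) '' ↑B).ncard ≤
        A.card + B.card := by
      calc ((↑A : Set V) ∪ (fun e : ↥G.edgeSet => fst e.val) '' ↑B).ncard ≤
          (↑A : Set V).ncard + ((fun e : ↥G.edgeSet => fst e.val) '' ↑B).ncard :=
            Set.ncard_union_le _ _
      _ ≤ A.card + B.card := by
            rw [Set.ncard_coe_finset]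
            exact Nat.add_le_add_left
              (le_trans (Set.ncard_image_le (Set.toFinite _)) (by rw [Set.ncard_coe_finset])) _
    calc (((↑A : Set V) ∪ (fun e : ↥G.edgeSet => fst e.val) '' ↑B).ncard : ℤ) ≤
        (A.card : ℤ) + B.card := by exact_mod_cast hle
    _ ≤ (Fintype.card V : ℤ) - k := hAB
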